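/- Consider the relaxed MPCaC problem in ℝ³ with f(x) = x₁, one inequality constraint g(x) = (1 − x₁)³ + x₃² ≤ 0, no equality constraints, and α = 2 (so θ(y) = 1 − y₁ − y₂ − y₃). Then the pair (x*, y*) with x* = (1, 0, 0) and y* = (0, 1, 0) is a global minimizer of this relaxed problem, and yet (x*, y*) is not W_I-stationary for any index set I with I_{0+} ∪ I_{01} ⊆ I ⊆ I_0 (here the only admissible sets are I = {2} and I = {2, 3}). -/

import Mathlib

open Filter Topology
open scoped Classical

noncomputable section

/-- `ℝⁿ` as a Euclidean space. -/
abbrev E (n : ℕ) : Type := EuclideanSpace ℝ (Fin n)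

/-- The constraint function `θ(y) = n − α − eᵀ y` of the relaxed MPCaC problem. -/
def theta {n : ℕ} (α : ℕ) (y : E n) : ℝ := (n : ℝ) - (α : ℝ) - ∑ i, y i

/-- Feasibility for the relaxed MPCaC problem:
`g(x) ≤ 0, h(x) = 0, θ(y) ≤ 0, xᵢ yᵢ = 0, 0 ≤ yᵢ ≤ 1`. -/
def relFeas {n m p : ℕ} (g : E n → Fin m → ℝ) (h : E n → Fin p → ℝ) (α : ℕ)
    (x y : E n) : Prop :=
  (∀ i, g x i ≤ 0) ∧ (∀ j, h x j = 0) ∧ theta α y ≤ 0 ∧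
  (∀ i, x i * y i = 0) ∧ (∀ i, 0 ≤ y i ∧ y i ≤ 1)

/-- `∇f(x) + Σᵢ λᵍᵢ ∇gᵢ(x) + Σⱼ λʰⱼ ∇hⱼ(x)`. -/
def gradLx {n m p : ℕ} (f : E n → ℝ) (g : E n → Fin m → ℝ) (h : E n → Fin p → ℝ)
    (x : E n) (lg : Fin m → ℝ) (lh : Fin p → ℝ) : E n :=
  gradient f x + ∑ i, lg i • gradient (fun z => g z i) x
    + ∑ j, lh j • gradient (fun z => h z j) x

/-- `i ∈ I_{0+}(x̄,ȳ) ∪ I_{01}(x̄,ȳ)`, i.e. `x̄ᵢ = 0` and (`0 < ȳᵢ < 1` or `ȳᵢ = 1`). -/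
def inI0p01 {n : ℕ} (xb yb : E n) (i : Fin n) : Prop :=
  xb i = 0 ∧ ((0 < yb i ∧ yb i < 1) ∨ yb i = 1)

/-- Admissibility of the index set `I`: `I_{0+} ∪ I_{01} ⊆ I ⊆ I_0`. -/
def idxOK {n : ℕ} (xb yb : E n) (I : Finset (Fin n)) : Prop :=
  (∀ i, inI0p01 xb yb i → i ∈ I) ∧ (∀ i ∈ I, xb i = 0)

/-- Feasibility for the tightened problem `TNLP_I(x̄,ȳ)`:
`g(x) ≤ 0, h(x) = 0, θ(y) ≤ 0, xᵢ = 0 (i ∈ I), −yᵢ ≤ 0 (i ∈ I_{0+} ∪ I_{01}),`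
`−yᵢ = 0 (i ∈ I_{00} ∪ I_{±0}), y − e ≤ 0`. Note `I_{00} ∪ I_{±0} = {i | ȳᵢ = 0}`. -/
def tnlpFeas {n m p : ℕ} (g : E n → Fin m → ℝ) (h : E n → Fin p → ℝ) (α : ℕ)
    (xb yb : E n) (I : Finset (Fin n)) (x y : E n) : Prop :=
  (∀ i, g x i ≤ 0) ∧ (∀ j, h x j = 0) ∧ theta α y ≤ 0 ∧
  (∀ i ∈ I, x i = 0) ∧
  (∀ i, inI0p01 xb yb i → -(y i) ≤ 0) ∧
  (∀ i, yb i = 0 → -(y i) = 0) ∧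
  (∀ i, y i - 1 ≤ 0)

/-- `W_I`-stationarity for the relaxed MPCaC problem (Definition 2.9 of the paper). -/
def WStat {n m p : ℕ} (f : E n → ℝ) (g : E n → Fin m → ℝ) (h : E n → Fin p → ℝ)
    (α : ℕ) (xb yb : E n) (I : Finset (Fin n)) : Prop :=
  ∃ (lg : Fin m → ℝ) (lh : Fin p → ℝ) (lθ : ℝ) (lG : Fin n → ℝ) (lH lH' : Fin n → ℝ),
    (∀ i, 0 ≤ lg i) ∧ 0 ≤ lθ ∧ (∀ i, 0 ≤ lH' i) ∧
    gradLx f g h xb lg lh + ∑ i ∈ I, lG i • EuclideanSpace.single i 1 = 0 ∧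
    (∀ i, -lθ - lH i + lH' i = 0) ∧
    (∑ i, lg i * g xb i) = 0 ∧
    lθ * theta α yb = 0 ∧
    (∀ i, inI0p01 xb yb i → lH i = 0) ∧
    (∑ i, lH' i * (yb i - 1)) = 0

/-- Approximate weak (`AW`) stationarity for the relaxed MPCaC problem
(Definition 3.1 of the paper). -/
def AWStat {n m p : ℕ} (f : E n → ℝ) (g : E n → Fin m → ℝ) (h : E n → Fin p → ℝ)
    (α : ℕ) (xb yb : E n) : Prop :=
  ∃ (x y : ℕ → E n) (lg : ℕ → Fin m → ℝ) (lh : ℕ → Fin p → ℝ) (lθ : ℕ → ℝ)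
    (lG : ℕ → E n) (lH lH' : ℕ → Fin n → ℝ),
    (∀ k i, 0 ≤ lg k i) ∧ (∀ k, 0 ≤ lθ k) ∧ (∀ k i, 0 ≤ lH' k i) ∧
    Tendsto x atTop (𝓝 xb) ∧ Tendsto y atTop (𝓝 yb) ∧
    Tendsto (fun k => gradLx f g h (x k) (lg k) (lh k) + lG k) atTop (𝓝 0) ∧
    Tendsto (fun k i => -(lθ k) - lH k i + lH' k i) atTop (𝓝 (0 : Fin n → ℝ)) ∧
    (∀ i, Tendsto (fun k => min (-(g (x k) i)) (lg k i)) atTop (𝓝 0)) ∧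
    Tendsto (fun k => min (-(theta α (y k))) (lθ k)) atTop (𝓝 0) ∧
    (∀ i, Tendsto (fun k => min |x k i| |lG k i|) atTop (𝓝 0)) ∧
    (∀ i, Tendsto (fun k => min (y k i) |lH k i|) atTop (𝓝 0)) ∧
    (∀ i, Tendsto (fun k => min (1 - y k i) (lH' k i)) atTop (𝓝 0))

/-- Objective of the example: `f(x) = x₁`. -/
def fEx : E 3 → ℝ := fun x => x 0

/-- Inequality constraint of the example: `g(x) = (1 − x₁)³ + x₃² ≤ 0`. -/
def gEx : E 3 → Fin 1 → ℝ := fun x _ => (1 - x 0) ^ 3 + (x 2) ^ 2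

/-- No equality constraints. -/
def hEx : E 3 → Fin 0 → ℝ := fun _ j => Fin.elim0 j

/-- `x* = (1, 0, 0)`. -/
def xStar : E 3 := !₂[1, 0, 0]

/-- `y* = (0, 1, 0)`. -/
def yStar : E 3 := !₂[0, 1, 0]

/-- Example 2.13 of the paper. For the relaxed MPCaC problem
in `ℝ³` with `f(x) = x₁`, `g(x) = (1 − x₁)³ + x₃² ≤ 0`, no equality
constraints and `α = 2`, the pair `(x*, y*) = ((1,0,0), (0,1,0))` is a global
minimizer of the relaxed problem, yet it is not `W_I`-stationary for any
admissible index set `I` (with `I_{0+} ∪ I_{01} ⊆ I ⊆ I_0`). -/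

lemma xStar_zero : xStar 0 = 1 := by simp [xStar]
lemma xStar_two : xStar 2 = 0 := by simp [xStar]

lemma hasGrad_f : HasGradientAt fEx (EuclideanSpace.single (0 : Fin 3) 1) xStar := by
  rw [hasGradientAt_iff_hasFDerivAt]
  have h : (InnerProductSpace.toDual ℝ (E 3)) (EuclideanSpace.single (0 : Fin 3) 1)
      = (EuclideanSpace.proj (0 : Fin 3) : E 3 →L[ℝ] ℝ) := by
    ext v
    simp [InnerProductSpace.toDual_apply_apply, EuclideanSpace.inner_single_left]
  rw [h]
  show HasFDerivAt (⇑(EuclideanSpace.proj (0 : Fin 3) : E 3 →L[ℝ] ℝ)) (EuclideanSpace.proj (0 : Fin 3) : E 3 →L[ℝ] ℝ) xStar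
  exact (EuclideanSpace.proj (0 : Fin 3) : E 3 →L[ℝ] ℝ).hasFDerivAt

lemma hasGrad_g : HasGradientAt (fun z : E 3 => (1 - z 0) ^ 3 + (z 2) ^ 2) (0 : E 3) xStar := by
  rw [hasGradientAt_iff_hasFDerivAt, map_zero]
  have h0 : HasFDerivAt (fun z : E 3 => z 0) (EuclideanSpace.proj (0 : Fin 3) : E 3 →L[ℝ] ℝ) xStar := by
    show HasFDerivAt (⇑(EuclideanSpace.proj (0 : Fin 3) : E 3 →L[ℝ] ℝ)) (EuclideanSpace.proj (0 : Fin 3) : E 3 →L[ℝ] ℝ) xStar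
    exact (EuclideanSpace.proj (0 : Fin 3) : E 3 →L[ℝ] ℝ).hasFDerivAt
  have h2 : HasFDerivAt (fun z : E 3 => z 2) (EuclideanSpace.proj (2 : Fin 3) : E 3 →L[ℝ] ℝ) xStar := by
    show HasFDerivAt (⇑(EuclideanSpace.proj (2 : Fin 3) : E 3 →L[ℝ] ℝ)) (EuclideanSpace.proj (2 : Fin 3) : E 3 →L[ℝ] ℝ) xStar
    exact (EuclideanSpace.proj (2 : Fin 3) : E 3 →L[ℝ] ℝ).hasFDerivAt
  have ha : HasDerivAt (fun t : ℝ => (1 - t) ^ 3) 0 (xStar 0) := by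
    have h := ((hasDerivAt_id (xStar 0)).const_sub 1).pow 3
    rw [xStar_zero] at h ⊢
    simp at h; exact h
  have hb : HasDerivAt (fun t : ℝ => t ^ 2) 0 (xStar 2) := by
    have h := (hasDerivAt_id (xStar 2)).pow 2
    rw [xStar_two] at h ⊢
    simp at h; exact h
  have hA := ha.comp_hasFDerivAt xStar h0
  have hB := hb.comp_hasFDerivAt xStar h2
  have := hA.add hB
  simp at this; exact this

lemma gradLx_eq (lg : Fin 1 → ℝ) (lh : Fin 0 → ℝ) :
    gradLx fEx gEx hEx xStar lg lh = EuclideanSpace.single (0 : Fin 3) 1 := by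
  unfold gradLx
  rw [hasGrad_f.gradient]
  have hg : ∀ i : Fin 1, gradient (fun z => gEx z i) xStar = 0 := fun i =>
    hasGrad_g.gradient
  simp [hg]

theorem example_global_min_not_WStat :
    (relFeas gEx hEx 2 xStar yStar ∧
      ∀ x y, relFeas gEx hEx 2 x y → fEx xStar ≤ fEx x) ∧
    (∀ I : Finset (Fin 3), idxOK xStar yStar I →
      ¬ WStat fEx gEx hEx 2 xStar yStar I) := by
  constructor
  · constructor
    · refine ⟨?_, ?_, ?_, ?_, ?_⟩
      · intro i; norm_num [gEx, xStar, Matrix.cons_val_two]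
      · exact fun j => j.elim0
      · norm_num [theta, yStar, Fin.sum_univ_three, Matrix.cons_val_two]
      · intro i; fin_cases i <;> simp [xStar, yStar]
      · intro i; fin_cases i <;> norm_num [yStar]
    · rintro x y ⟨hg, -, -, -, -⟩
      have h := hg 0
      simp only [gEx] at h
      have h1 : fEx xStar = 1 := by simp [fEx, xStar]
      rw [h1]
      show (1 : ℝ) ≤ x 0
      have h3 : (1 - x 0) ^ 3 ≤ 0 := by nlinarith [sq_nonneg (x 2)]
      have h4 : 1 - x 0 ≤ 0 := by
        by_contra hc
        push_neg at hc
        nlinarith [pow_pos hc 3]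
      linarith
  · rintro I ⟨-, hmem⟩ ⟨lg, lh, lθ, lG, lH, lH', -, -, -, heq, -⟩
    have h0I : (0 : Fin 3) ∉ I := fun h => by
      have := hmem 0 h
      rw [xStar_zero] at this
      norm_num at this
    have h0 := congrArg (fun v : E 3 => v (0 : Fin 3)) heq
    rw [gradLx_eq] at heq
    have h0 := congrArg (fun v : E 3 => v (0 : Fin 3)) heq
    have hsum : ((∑ i ∈ I, lG i • EuclideanSpace.single i 1 : E 3)) 0 = 0 := by
      rw [WithLp.ofLp_sum, Finset.sum_apply]
      refine Finset.sum_eq_zero fun i hi => ?_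
      have hne : (0 : Fin 3) ≠ i := fun h => h0I (h ▸ hi)
      simp [EuclideanSpace.single_apply, hne]
    rw [PiLp.add_apply, hsum] at h0
    simp [EuclideanSpace.single_apply] at h0
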